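/- Let G be a connected graph on n₀ vertices with a triangle-factor, and suppose |E(G)| = (4/3)·n₀ − 1. Then for any two distinct triangles Tᵢ, Tⱼ of the triangle-factor, there is at most one edge of G between V(Tᵢ) and V(Tⱼ), and the auxiliary graph H on the triangles (with Tᵢ ~ Tⱼ iff some edge of G joins them) is a tree. -/

import Mathlib

open SimpleGraph Finset

def IsTriangleFactor {V : Type*} [DecidableEq V] (G : SimpleGraph V) (P : Finset (Finset V)) : Prop :=
  (∀ t ∈ P, G.IsNClique 3 t) ∧ (∀ v : V, ∃! t, t ∈ P ∧ v ∈ t)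

lemma reach_map' {V T : Type*} {G : SimpleGraph V} {H : SimpleGraph T} (f : V → T)
    (h : ∀ a b, G.Adj a b → H.Reachable (f a) (f b)) {a b : V} (hr : G.Reachable a b) :
    H.Reachable (f a) (f b) := by
  obtain ⟨w⟩ := hr
  induction w with
  | nil => rfl
  | cons ha _ ih => exact (h _ _ ha).trans ih

lemma connected_deleteEdges' {V : Type*} {G : SimpleGraph V} (hc : G.Connected)
    {v w : V} (hadj : G.Adj v w) (hb : ¬ G.IsBridge s(v,w)) :
    (G.deleteEdges {s(v,w)}).Connected := by
  rw [SimpleGraph.isBridge_iff] at hb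
  push_neg at hb
  have hreach : (G.deleteEdges {s(v,w)}).Reachable v w := hb
  have key : ∀ a b, G.Adj a b → (G.deleteEdges {s(v,w)}).Reachable a b := by
    intro a b hab
    by_cases he : s(a,b) = s(v,w)
    · rw [Sym2.eq_iff] at he
      rcases he with ⟨ha, hb'⟩ | ⟨ha, hb'⟩
      · subst ha; subst hb'; exact hreach
      · subst ha; subst hb'; exact hreach.symm
    · exact SimpleGraph.Adj.reachable (by simp [he, hab])
  have : Nonempty V := hc.nonempty
  refine SimpleGraph.Connected.mk fun a b => ?_
  simpa using reach_map' id (by simpa using key) (hc.preconnected a b)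

open scoped Classical in
lemma connected_card_le' {T : Type*} [Fintype T] (k : ℕ) :
    ∀ (H : SimpleGraph T), H.edgeFinset.card = k → H.Connected → Fintype.card T ≤ k + 1 := by
  induction k using Nat.strong_induction_on with
  | _ k ih =>
    intro H hk hc
    by_cases ha : H.IsAcyclic
    · have ht : H.IsTree := ⟨hc, ha⟩
      have := ht.card_edgeFinset
      omega
    · rw [isAcyclic_iff_forall_adj_isBridge] at ha
      push_neg at ha
      obtain ⟨v, w, hadj, hb⟩ := ha
      have hc' := connected_deleteEdges' hc hadj hb
      have he : s(v,w) ∈ H.edgeFinset := by simpa using hadj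
      have hfe : (H.deleteEdges {s(v,w)}).edgeFinset = H.edgeFinset.erase s(v,w) := by
        ext e
        simp [edgeSet_deleteEdges, Finset.mem_erase, and_comm]
      have hcard : (H.deleteEdges {s(v,w)}).edgeFinset.card = k - 1 := by
        rw [hfe, Finset.card_erase_of_mem he, hk]
      have hk1 : 1 ≤ k := by
        have := Finset.card_pos.mpr ⟨_, he⟩; omega
      have := ih (k-1) (by omega) _ (by convert hcard) hc'
      omega

open scoped Classical in
lemma isTree_of_connected_card_le' {T : Type*} [Fintype T] (H : SimpleGraph T)
    (hc : H.Connected) (hle : H.edgeFinset.card + 1 ≤ Fintype.card T) : H.IsTree := by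
  refine ⟨hc, ?_⟩
  by_contra ha
  rw [isAcyclic_iff_forall_adj_isBridge] at ha
  push_neg at ha
  obtain ⟨v, w, hadj, hb⟩ := ha
  have hc' := connected_deleteEdges' hc hadj hb
  have he : s(v,w) ∈ H.edgeFinset := by simpa using hadj
  have hfe : (H.deleteEdges {s(v,w)}).edgeFinset = H.edgeFinset.erase s(v,w) := by
    ext e
    simp [edgeSet_deleteEdges, Finset.mem_erase, and_comm]
  have hcard : (H.deleteEdges {s(v,w)}).edgeFinset.card = H.edgeFinset.card - 1 := by
    rw [hfe, Finset.card_erase_of_mem he]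
  have h1 : 1 ≤ H.edgeFinset.card := Finset.card_pos.mpr ⟨_, he⟩
  have hlow := connected_card_le' (H.edgeFinset.card - 1) _ (by convert hcard) hc'
  omega

set_option maxHeartbeats 1000000 in
theorem stmt4 {V : Type*} [Fintype V] [DecidableEq V] (G : SimpleGraph V) [DecidableRel G.Adj]
    (n₀ : ℕ) (hn : Fintype.card V = n₀) (hconn : G.Connected)
    (P : Finset (Finset V)) (hP : IsTriangleFactor G P)
    (hE : 3 * G.edgeFinset.card + 3 = 4 * n₀) :
    (∀ t₁ ∈ P, ∀ t₂ ∈ P, t₁ ≠ t₂ →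
      ∀ x₁ ∈ t₁, ∀ y₁ ∈ t₂, ∀ x₂ ∈ t₁, ∀ y₂ ∈ t₂,
        G.Adj x₁ y₁ → G.Adj x₂ y₂ → x₁ = x₂ ∧ y₁ = y₂) ∧
    (SimpleGraph.fromRel
      (fun t₁ t₂ : {x // x ∈ P} => ∃ x ∈ t₁.1, ∃ y ∈ t₂.1, G.Adj x y)).IsTree := by
  classical
  obtain ⟨hclique, hpart⟩ := hP
  set T := {x // x ∈ P}
  set f : V → T := fun v => ⟨P.choose (v ∈ ·) (hpart v), P.choose_mem _ _⟩ with hf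
  have hmemf : ∀ v : V, v ∈ (f v).1 := fun v => P.choose_property (v ∈ ·) (hpart v)
  have huniq : ∀ (v : V) (t : Finset V), t ∈ P → v ∈ t → t = (f v).1 := by
    intro v t ht hv
    exact (hpart v).unique ⟨ht, hv⟩ ⟨(f v).2, hmemf v⟩
  have huniq' : ∀ (v : V) (t : T), v ∈ t.1 → t = f v := by
    intro v t hv; exact Subtype.ext (huniq v t.1 t.2 hv)
  set m := P.card with hm
  have hcard3 : ∀ t ∈ P, t.card = 3 := fun t ht => (hclique t ht).2
  have hdisj : ∀ t₁ ∈ P, ∀ t₂ ∈ P, t₁ ≠ t₂ → Disjoint t₁ t₂ := by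
    intro t₁ h₁ t₂ h₂ hne
    rw [Finset.disjoint_left]
    intro a ha₁ ha₂
    exact hne ((huniq a t₁ h₁ ha₁).trans (huniq a t₂ h₂ ha₂).symm)
  have hunion : P.biUnion id = Finset.univ := by
    ext v
    simp only [Finset.mem_biUnion, id, Finset.mem_univ, iff_true]
    exact ⟨(f v).1, (f v).2, hmemf v⟩
  have hVcard : Fintype.card V = 3 * m := by
    have h := Finset.card_biUnion (s := P) (t := id) (fun t₁ h₁ t₂ h₂ hne => hdisj t₁ h₁ t₂ h₂ hne)
    rw [hunion, Finset.card_univ] at h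
    rw [h]
    calc ∑ u ∈ P, (id u).card = ∑ _u ∈ P, 3 := Finset.sum_congr rfl (fun t ht => hcard3 t ht)
      _ = 3 * m := by rw [Finset.sum_const, smul_eq_mul, mul_comm]
  -- split edges into inner and cross edges
  set φ : Sym2 V → Sym2 T := Sym2.map f with hφ
  set C : Finset (Sym2 V) := G.edgeFinset.filter (fun e => ¬ (φ e).IsDiag) with hC
  set I : Finset (Sym2 V) := G.edgeFinset.filter (fun e => (φ e).IsDiag) with hI
  have hIC : I.card + C.card = G.edgeFinset.card := by
    rw [hI, hC]
    exact Finset.card_filter_add_card_filter_not _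
  have hIeq : I = P.biUnion (fun t => t.sym2.filter (fun e => ¬ e.IsDiag)) := by
    ext e
    induction e using Sym2.ind with
    | _ u v =>
      simp only [hI, Finset.mem_filter, mem_edgeFinset, Finset.mem_biUnion,
        hφ, Sym2.map_pair_eq, Sym2.isDiag_iff_proj_eq, Finset.mk_mem_sym2_iff, mem_edgeSet]
      constructor
      · rintro ⟨hadj, hfeq⟩
        exact ⟨(f u).1, (f u).2, ⟨hmemf u, hfeq ▸ hmemf v⟩, hadj.ne⟩
      · rintro ⟨t, ht, ⟨hu, hv⟩, hne⟩
        refine ⟨(hclique t ht).1 hu hv hne, ?_⟩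
        have h1 := huniq' u ⟨t, ht⟩ hu
        have h2 := huniq' v ⟨t, ht⟩ hv
        exact h1.symm.trans h2
  have hIcard : I.card = 3 * m := by
    rw [hIeq, Finset.card_biUnion]
    · calc ∑ t ∈ P, (t.sym2.filter (fun e => ¬ e.IsDiag)).card = ∑ _t ∈ P, 3 := by
            refine Finset.sum_congr rfl (fun t ht => ?_)
            have hdiag : t.sym2.filter (fun e => e.IsDiag) = t.image Sym2.diag := by
              ext e
              induction e using Sym2.ind with
              | _ u v =>
                simp only [Finset.mem_filter, Finset.mk_mem_sym2_iff, Finset.mem_image,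
                  Sym2.isDiag_iff_proj_eq]
                constructor
                · rintro ⟨⟨hu, _⟩, rfl⟩
                  exact ⟨u, hu, rfl⟩
                · rintro ⟨a, ha, hae⟩
                  rw [Sym2.diag, Sym2.eq_iff] at hae
                  rcases hae with ⟨rfl, rfl⟩ | ⟨rfl, rfl⟩ <;> exact ⟨⟨ha, ha⟩, rfl⟩
            have h1 : (t.sym2.filter (fun e => e.IsDiag)).card = 3 := by
              rw [hdiag, Finset.card_image_of_injective _ Sym2.diag_injective, hcard3 t ht]
            have h2 : t.sym2.card = 6 := by
              rw [Finset.card_sym2, hcard3 t ht]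
              rfl
            have h3 := Finset.card_filter_add_card_filter_not
              (s := t.sym2) (p := fun e => e.IsDiag)
            omega
          _ = 3 * m := by rw [Finset.sum_const, smul_eq_mul, mul_comm]
    · intro t₁ h₁ t₂ h₂ hne
      rw [Function.onFun, Finset.disjoint_left]
      intro e he₁ he₂
      induction e using Sym2.ind with
      | _ u v =>
        simp only [Finset.mem_filter, Finset.mk_mem_sym2_iff] at he₁ he₂
        exact hne ((huniq u t₁ h₁ he₁.1.1).trans (huniq u t₂ h₂ he₂.1.1).symm)
  -- cardinalities
  have hm1 : 1 ≤ m := by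
    rcases Nat.eq_zero_or_pos m with h0 | h; · rw [hn] at hVcard; omega
    exact h
  have hCcard : C.card + 1 = m := by
    rw [hn] at hVcard; omega
  -- the auxiliary graph
  set H : SimpleGraph T :=
    SimpleGraph.fromRel (fun t₁ t₂ : T => ∃ x ∈ t₁.1, ∃ y ∈ t₂.1, G.Adj x y) with hH
  have hTcard : Fintype.card T = m := Fintype.card_coe P
  -- image of cross edges is the edge set of H
  have himg : C.image φ = H.edgeFinset := by
    ext eH
    induction eH using Sym2.ind with
    | _ t₁ t₂ =>
      simp only [Finset.mem_image, mem_edgeFinset, mem_edgeSet, hH, fromRel_adj]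
      constructor
      · rintro ⟨e, heC, hφe⟩
        induction e using Sym2.ind with
        | _ u v =>
          rw [hC, Finset.mem_filter, mem_edgeFinset, mem_edgeSet] at heC
          obtain ⟨hadj, hnd⟩ := heC
          rw [hφ, Sym2.map_pair_eq, Sym2.eq_iff] at hφe
          rw [hφ, Sym2.map_pair_eq, Sym2.isDiag_iff_proj_eq] at hnd
          rcases hφe with ⟨rfl, rfl⟩ | ⟨rfl, rfl⟩
          · exact ⟨hnd, Or.inl ⟨u, hmemf u, v, hmemf v, hadj⟩⟩
          · exact ⟨fun h => hnd h.symm, Or.inr ⟨u, hmemf u, v, hmemf v, hadj⟩⟩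
      · rintro ⟨hne, ⟨x, hx, y, hy, hadj⟩ | ⟨x, hx, y, hy, hadj⟩⟩
        · refine ⟨s(x, y), ?_, ?_⟩
          · rw [hC, Finset.mem_filter, mem_edgeFinset, mem_edgeSet]
            refine ⟨hadj, ?_⟩
            rw [hφ, Sym2.map_pair_eq, Sym2.isDiag_iff_proj_eq,
              ← huniq' x t₁ hx, ← huniq' y t₂ hy]
            exact fun h => hne h
          · rw [hφ, Sym2.map_pair_eq, ← huniq' x t₁ hx, ← huniq' y t₂ hy]
        · refine ⟨s(x, y), ?_, ?_⟩
          · rw [hC, Finset.mem_filter, mem_edgeFinset, mem_edgeSet]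
            refine ⟨hadj, ?_⟩
            rw [hφ, Sym2.map_pair_eq, Sym2.isDiag_iff_proj_eq,
              ← huniq' x t₂ hx, ← huniq' y t₁ hy]
            exact fun h => hne h.symm
          · rw [hφ, Sym2.map_pair_eq, ← huniq' x t₂ hx, ← huniq' y t₁ hy, Sym2.eq_swap]
  have hHle : H.edgeFinset.card ≤ C.card := himg ▸ Finset.card_image_le
  -- H is connected
  have hHconn : H.Connected := by
    have : Nonempty T := Fintype.card_pos_iff.mp (by omega)
    refine SimpleGraph.Connected.mk fun t₁ t₂ => ?_
    have key : ∀ a b : V, G.Adj a b → H.Reachable (f a) (f b) := by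
      intro a b hab
      by_cases hfe : f a = f b
      · rw [hfe]
      · exact SimpleGraph.Adj.reachable
          (by rw [hH, fromRel_adj]; exact ⟨hfe, Or.inl ⟨a, hmemf a, b, hmemf b, hab⟩⟩)
    obtain ⟨u, hu⟩ := Finset.card_pos.mp (by rw [hcard3 t₁.1 t₁.2]; omega)
    obtain ⟨v, hv⟩ := Finset.card_pos.mp (by rw [hcard3 t₂.1 t₂.2]; omega)
    have h1 := huniq' u t₁ hu
    have h2 := huniq' v t₂ hv
    rw [h1, h2]
    exact reach_map' f key (hconn.preconnected u v)
  have hHge := connected_card_le' H.edgeFinset.card H (by convert rfl) hHconn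
  rw [hTcard] at hHge
  have hHcard : H.edgeFinset.card = C.card := by omega
  have hinj : Set.InjOn φ ↑C := by
    rw [← Finset.card_image_iff, himg, hHcard]
  constructor
  · intro t₁ h₁ t₂ h₂ hne x₁ hx₁ y₁ hy₁ x₂ hx₂ y₂ hy₂ hadj₁ hadj₂
    have hft : ∀ x ∈ t₁, ∀ y ∈ t₂, G.Adj x y → s(x, y) ∈ C := by
      intro x hx y hy hadj
      rw [hC, Finset.mem_filter, mem_edgeFinset, mem_edgeSet]
      refine ⟨hadj, ?_⟩
      rw [hφ, Sym2.map_pair_eq, Sym2.isDiag_iff_proj_eq,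
        ← huniq' x ⟨t₁, h₁⟩ hx, ← huniq' y ⟨t₂, h₂⟩ hy]
      exact fun h => hne (congrArg Subtype.val h)
    have he₁ : s(x₁, y₁) ∈ C := hft x₁ hx₁ y₁ hy₁ hadj₁
    have he₂ : s(x₂, y₂) ∈ C := hft x₂ hx₂ y₂ hy₂ hadj₂
    have hφeq : φ s(x₁, y₁) = φ s(x₂, y₂) := by
      rw [hφ, Sym2.map_pair_eq, Sym2.map_pair_eq,
        ← huniq' x₁ ⟨t₁, h₁⟩ hx₁, ← huniq' y₁ ⟨t₂, h₂⟩ hy₁,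
        ← huniq' x₂ ⟨t₁, h₁⟩ hx₂, ← huniq' y₂ ⟨t₂, h₂⟩ hy₂]
    have := hinj he₁ he₂ hφeq
    rw [Sym2.eq_iff] at this
    rcases this with ⟨h1, h2⟩ | ⟨h1, h2⟩
    · exact ⟨h1, h2⟩
    · exfalso
      subst h1
      exact hne ((huniq x₁ t₁ h₁ hx₁).trans (huniq x₁ t₂ h₂ hy₂).symm)
  · refine isTree_of_connected_card_le' H hHconn ?_
    rw [hTcard]
    convert (show H.edgeFinset.card + 1 ≤ m by omega)
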